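/- arXiv:math/0508168 — 4 statements merged into one kernel-verified Lean document; each statement's English description precedes it below -/
import Mathlib

section
/- The function h satisfies the six-term identity h(λ)h(λ-1) - h(μ)h(ν) + h(μ-ν)h(ν) - h(μ-ν)h(λ) + h(ν-μ)h(μ) - h(ν-μ)h(λ) = 0 for all λ, μ, ν where defined. -/
lemma six_frac (a1 b1 a2 b2 a3 b3 a4 b4 a5 b5 a6 b6 : ℂ)
    (h1 : b1 ≠ 0) (h2 : b2 ≠ 0) (h3 : b3 ≠ 0) (h4 : b4 ≠ 0) (h5 : b5 ≠ 0) (h6 : b6 ≠ 0)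
    (hnum : a1 * (b2 * b3 * b4 * b5 * b6) - a2 * (b1 * b3 * b4 * b5 * b6)
      + a3 * (b1 * b2 * b4 * b5 * b6) - a4 * (b1 * b2 * b3 * b5 * b6)
      + a5 * (b1 * b2 * b3 * b4 * b6) - a6 * (b1 * b2 * b3 * b4 * b5) = 0) :
    a1 / b1 - a2 / b2 + a3 / b3 - a4 / b4 + a5 / b5 - a6 / b6 = 0 := by
  have key : a1 / b1 - a2 / b2 + a3 / b3 - a4 / b4 + a5 / b5 - a6 / b6 =
      (a1 * (b2 * b3 * b4 * b5 * b6) - a2 * (b1 * b3 * b4 * b5 * b6)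
      + a3 * (b1 * b2 * b4 * b5 * b6) - a4 * (b1 * b2 * b3 * b5 * b6)
      + a5 * (b1 * b2 * b3 * b4 * b6) - a6 * (b1 * b2 * b3 * b4 * b5))
      / (b1 * b2 * b3 * b4 * b5 * b6) := by
    rw [div_sub_div _ _ h1 h2, div_add_div _ _ (mul_ne_zero h1 h2) h3,
      div_sub_div _ _ (mul_ne_zero (mul_ne_zero h1 h2) h3) h4,
      div_add_div _ _ (mul_ne_zero (mul_ne_zero (mul_ne_zero h1 h2) h3) h4) h5,
      div_sub_div _ _ (mul_ne_zero (mul_ne_zero (mul_ne_zero (mul_ne_zero h1 h2) h3) h4) h5) h6,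
      div_eq_div_iff
        (mul_ne_zero (mul_ne_zero (mul_ne_zero (mul_ne_zero (mul_ne_zero h1 h2) h3) h4) h5) h6)
        (mul_ne_zero (mul_ne_zero (mul_ne_zero (mul_ne_zero (mul_ne_zero h1 h2) h3) h4) h5) h6)]
    ring
  rw [key, hnum, zero_div]

set_option maxHeartbeats 2000000 in
/-- six-term identity for `h`. With `x = q^{-2λ}`, `y = q^{-2μ}`, `z = q^{-2ν}`
and `H(u) = q(u - q^{-2})/(u - 1)`, so that `h(λ-1) = H(q²x)`, `h(μ-ν) = H(y/z)`,
`h(ν-μ) = H(z/y)`: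
`H(x)H(q²x) - H(y)H(z) + H(y/z)H(z) - H(y/z)H(x) + H(z/y)H(y) - H(z/y)H(x) = 0`,
whenever all denominators are nonzero. -/
theorem stmt_5 (q x y z : ℂ) (hq : q ≠ 0) (hq2 : q ^ 2 ≠ 1)
    (H : ℂ → ℂ) (hH : ∀ u, H u = q * (u - (q ^ 2)⁻¹) / (u - 1))
    (hx0 : x ≠ 0) (hx1 : x ≠ 1) (hy0 : y ≠ 0) (hy1 : y ≠ 1)
    (hz0 : z ≠ 0) (hz1 : z ≠ 1) (hqx : q ^ 2 * x ≠ 1) (hyz : y ≠ z) :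
    H x * H (q ^ 2 * x) - H y * H z + H (y / z) * H z - H (y / z) * H x
      + H (z / y) * H y - H (z / y) * H x = 0 := by
  have hx1' : x - 1 ≠ 0 := sub_ne_zero.mpr hx1
  have hy1' : y - 1 ≠ 0 := sub_ne_zero.mpr hy1
  have hz1' : z - 1 ≠ 0 := sub_ne_zero.mpr hz1
  have hqx' : q ^ 2 * x - 1 ≠ 0 := sub_ne_zero.mpr hqx
  have hyz' : y - z ≠ 0 := sub_ne_zero.mpr hyz
  have hzy' : z - y ≠ 0 := sub_ne_zero.mpr (Ne.symm hyz)
  have hq2' : (q : ℂ) ^ 2 ≠ 0 := pow_ne_zero _ hq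
  have hyz1 : y / z - 1 ≠ 0 := by
    rw [div_sub_one hz0]; exact div_ne_zero hyz' hz0
  have hzy1 : z / y - 1 ≠ 0 := by
    rw [div_sub_one hy0]; exact div_ne_zero hzy' hy0
  have e1 : H x = q * (q ^ 2 * x - 1) / (q ^ 2 * (x - 1)) := by
    rw [hH, div_eq_div_iff hx1' (mul_ne_zero hq2' hx1')]
    field_simp
  have e2 : H (q ^ 2 * x) = q * (q ^ 2 * (q ^ 2 * x) - 1) / (q ^ 2 * (q ^ 2 * x - 1)) := by
    rw [hH, div_eq_div_iff hqx' (mul_ne_zero hq2' hqx')]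
    field_simp
  have e5 : H y = q * (q ^ 2 * y - 1) / (q ^ 2 * (y - 1)) := by
    rw [hH, div_eq_div_iff hy1' (mul_ne_zero hq2' hy1')]
    field_simp
  have e6 : H z = q * (q ^ 2 * z - 1) / (q ^ 2 * (z - 1)) := by
    rw [hH, div_eq_div_iff hz1' (mul_ne_zero hq2' hz1')]
    field_simp
  have e3 : H (y / z) = q * (q ^ 2 * y - z) / (q ^ 2 * (y - z)) := by
    rw [hH, div_eq_div_iff hyz1 (mul_ne_zero hq2' hyz')]
    field_simp
  have e4 : H (z / y) = q * (q ^ 2 * z - y) / (q ^ 2 * (z - y)) := by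
    rw [hH, div_eq_div_iff hzy1 (mul_ne_zero hq2' hzy')]
    field_simp
  rw [e1, e2, e3, e4, e5, e6,
    div_mul_div_comm, div_mul_div_comm, div_mul_div_comm, div_mul_div_comm,
    div_mul_div_comm, div_mul_div_comm]
  apply six_frac
  · exact mul_ne_zero (mul_ne_zero hq2' hx1') (mul_ne_zero hq2' hqx')
  · exact mul_ne_zero (mul_ne_zero hq2' hy1') (mul_ne_zero hq2' hz1')
  · exact mul_ne_zero (mul_ne_zero hq2' hyz') (mul_ne_zero hq2' hz1')
  · exact mul_ne_zero (mul_ne_zero hq2' hyz') (mul_ne_zero hq2' hx1')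
  · exact mul_ne_zero (mul_ne_zero hq2' hzy') (mul_ne_zero hq2' hy1')
  · exact mul_ne_zero (mul_ne_zero hq2' hzy') (mul_ne_zero hq2' hx1')
  · ring
end

section
/- (Hall–Littlewood identity for the zero partition) For indeterminates x_1, …, x_r and a parameter t: ∑_{σ ∈ S_r} ∏_{i<j} (x_{σ(i)} - t·x_{σ(j)})/(x_{σ(i)} - x_{σ(j)}) = ∏_{i=1}^r (1 - t^i)/(1 - t). -/
open Finset Polynomial

lemma prod_pairs_succ {M : Type*} [CommMonoid M] (n : ℕ) (f : Fin (n+1) → Fin (n+1) → M) :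
    ∏ p ∈ univ.filter (fun p : Fin (n+1) × Fin (n+1) => p.1 < p.2), f p.1 p.2
    = (∏ j : Fin n, f 0 j.succ) *
      ∏ p ∈ univ.filter (fun p : Fin n × Fin n => p.1 < p.2), f p.1.succ p.2.succ := by
  rw [prod_filter, prod_filter, Fintype.prod_prod_type, Fintype.prod_prod_type,
    Fin.prod_univ_succ]
  congr 1
  · rw [Fin.prod_univ_succ]
    simp [Fin.succ_pos]
  · refine Finset.prod_congr rfl fun i _ => ?_
    rw [Fin.prod_univ_succ]
    simp [Fin.succ_lt_succ_iff, Fin.not_lt_zero]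

lemma lagrange_sum {K : Type*} [Field K] {ι : Type*} [DecidableEq ι]
    (t : K) (ht : t ≠ 1) :
    ∀ (s : Finset ι) (x : ι → K), Set.InjOn x s →
    ∑ k ∈ s, ∏ j ∈ s.erase k, (x k - t * x j) / (x k - x j)
      = (1 - t ^ s.card) / (1 - t) := by
  intro s
  induction s using Finset.strongInduction with
  | _ s ih =>
  intro x hx
  rcases s.eq_empty_or_nonempty with rfl | hs
  · simp
  by_cases h0 : ∃ k ∈ s, x k = 0
  · -- some value is zero
    obtain ⟨k0, hk0, hxk0⟩ := h0
    have hne : ∀ j ∈ s, j ≠ k0 → x j ≠ 0 := by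
      intro j hj hjk0 hxj
      exact hjk0 (hx hj hk0 (hxj.trans hxk0.symm))
    rw [← Finset.add_sum_erase _ _ hk0]
    have hterm0 : ∏ j ∈ s.erase k0, (x k0 - t * x j) / (x k0 - x j)
        = t ^ (s.erase k0).card := by
      rw [← Finset.prod_const]
      refine Finset.prod_congr rfl fun j hj => ?_
      have hxj : x j ≠ 0 := hne j (Finset.mem_of_mem_erase hj) (Finset.ne_of_mem_erase hj)
      rw [hxk0]
      field_simp
      ring
    have hrest : ∀ k ∈ s.erase k0,
        ∏ j ∈ s.erase k, (x k - t * x j) / (x k - x j)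
        = ∏ j ∈ (s.erase k0).erase k, (x k - t * x j) / (x k - x j) := by
      intro k hk
      have hkk0 : k0 ∈ s.erase k :=
        Finset.mem_erase.2 ⟨(Finset.ne_of_mem_erase hk).symm, hk0⟩
      rw [← Finset.mul_prod_erase _ _ hkk0, Finset.erase_right_comm]
      have hxk : x k ≠ 0 := hne k (Finset.mem_of_mem_erase hk) (Finset.ne_of_mem_erase hk)
      rw [hxk0]
      field_simp
      ring
    rw [Finset.sum_congr rfl hrest,
      ih (s.erase k0) (Finset.erase_ssubset hk0) x (hx.mono (Finset.erase_subset _ _))]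
    have hcard : (s.erase k0).card + 1 = s.card := Finset.card_erase_add_one hk0
    rw [hterm0, ← hcard]
    have h1t : (1 : K) - t ≠ 0 := sub_ne_zero.2 (Ne.symm ht)
    field_simp
    ring
  · -- all values nonzero: Lagrange interpolation at 0
    have hnz : ∀ k ∈ s, x k ≠ 0 := fun k hk hk0 => h0 ⟨k, hk, hk0⟩
    obtain ⟨m, hm⟩ : ∃ m, s.card = m + 1 :=
      ⟨s.card - 1, (Nat.succ_pred_eq_of_pos hs.card_pos).symm⟩
    set P : K := ∏ j ∈ s, x j with hP
    have hPne : P ≠ 0 := Finset.prod_ne_zero_iff.2 hnz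
    set G : Polynomial K := ∏ j ∈ s, (X - C (t * x j)) with hG
    set N : Polynomial K := ∏ j ∈ s, (X - C (x j)) with hN
    have hGm : G.Monic := monic_prod_of_monic _ _ fun j _ => monic_X_sub_C _
    have hNm : N.Monic := monic_prod_of_monic _ _ fun j _ => monic_X_sub_C _
    have hGdeg : G.degree = (s.card : WithBot ℕ) := by
      rw [hG, degree_prod]
      simp only [degree_X_sub_C, Finset.sum_const, nsmul_eq_mul, mul_one]
    have hNdeg : N.degree = (s.card : WithBot ℕ) := by
      rw [hN, degree_prod]
      simp only [degree_X_sub_C, Finset.sum_const, nsmul_eq_mul, mul_one]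
    have hdeg : (G - N).degree < (s.card : WithBot ℕ) := by
      rw [← hGdeg]
      exact degree_sub_lt (hGdeg.trans hNdeg.symm) hGm.ne_zero
        (hGm.leadingCoeff.trans hNm.leadingCoeff.symm)
    have hinterp := Lagrange.eq_interpolate hx hdeg
    rw [Lagrange.interpolate_apply] at hinterp
    have heval := congrArg (Polynomial.eval 0) hinterp
    have hG0 : G.eval 0 = (-1 : K) ^ (m + 1) * (t ^ (m + 1) * P) := by
      rw [hG, eval_prod]
      rw [Finset.prod_congr rfl (show ∀ j ∈ s, eval 0 (X - C (t * x j)) = -1 * (t * x j) by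
        intro j _; simp)]
      rw [Finset.prod_mul_distrib, Finset.prod_const, Finset.prod_mul_distrib,
        Finset.prod_const, ← hm, ← hP]
    have hN0 : N.eval 0 = (-1 : K) ^ (m + 1) * P := by
      rw [hN, eval_prod]
      rw [Finset.prod_congr rfl (show ∀ j ∈ s, eval 0 (X - C (x j)) = -1 * (x j) by
        intro j _; simp)]
      rw [Finset.prod_mul_distrib, Finset.prod_const, ← hm, ← hP]
    have hterm : ∀ i ∈ s,
        eval 0 (C ((G - N).eval (x i)) * Lagrange.basis s x i)
        = (1 - t) * (-1 : K) ^ m * P *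
            ∏ j ∈ s.erase i, (x i - t * x j) / (x i - x j) := by
      intro i hi
      have hNe : N.eval (x i) = 0 := by
        rw [hN, eval_prod]
        exact Finset.prod_eq_zero hi (by simp)
      have hGe : G.eval (x i) = (1 - t) * x i * ∏ j ∈ s.erase i, (x i - t * x j) := by
        rw [hG, eval_prod]
        rw [Finset.prod_congr rfl (show ∀ j ∈ s, eval (x i) (X - C (t * x j)) = x i - t * x j by
          intro j _; simp)]
        rw [← Finset.mul_prod_erase s _ hi]
        ring
      have hbasis : eval 0 (Lagrange.basis s x i)
          = ∏ j ∈ s.erase i, ((x i - x j)⁻¹ * (-(x j))) := by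
        rw [Lagrange.basis, eval_prod]
        refine Finset.prod_congr rfl fun j _ => ?_
        simp [Lagrange.basisDivisor]
      have hec : (s.erase i).card = m := by
        rw [Finset.card_erase_of_mem hi, hm]; omega
      rw [eval_mul, eval_C, eval_sub, hNe, hGe, hbasis, sub_zero]
      simp only [div_eq_mul_inv]
      rw [Finset.prod_mul_distrib, Finset.prod_mul_distrib,
        Finset.prod_congr rfl (show ∀ j ∈ s.erase i, -(x j) = -1 * x j by intro j _; ring),
        Finset.prod_mul_distrib, Finset.prod_const, hec, hP, ← Finset.mul_prod_erase s x hi]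
      ring
    rw [eval_finset_sum, Finset.sum_congr rfl hterm, ← Finset.mul_sum, eval_sub, hG0, hN0]
      at heval
    have h1t : (1 : K) - t ≠ 0 := sub_ne_zero.2 (Ne.symm ht)
    rw [hm, eq_div_iff h1t]
    have hc : ((-1 : K) ^ m * P) ≠ 0 := mul_ne_zero (pow_ne_zero _ (by norm_num)) hPne
    apply mul_left_cancel₀ hc
    linear_combination -heval

lemma hall_littlewood_aux {K : Type*} [Field K] (t : K) (ht : t ≠ 1) :
    ∀ (r : ℕ) (x : Fin r → K), Function.Injective x →
    ∑ σ : Equiv.Perm (Fin r),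
      ∏ p ∈ univ.filter (fun p : Fin r × Fin r => p.1 < p.2),
        (x (σ p.1) - t * x (σ p.2)) / (x (σ p.1) - x (σ p.2))
      = ∏ i ∈ range r, (1 - t ^ (i + 1)) / (1 - t) := by
  intro r
  induction r with
  | zero =>
    intro x hx
    simp
  | succ n ih =>
    intro x hx
    rw [← Equiv.sum_comp (Equiv.Perm.decomposeFin (n := n)).symm, Fintype.sum_prod_type]
    have step : ∀ p : Fin (n+1),
        ∑ τ : Equiv.Perm (Fin n),
          ∏ q ∈ univ.filter (fun q : Fin (n+1) × Fin (n+1) => q.1 < q.2),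
            (x (Equiv.Perm.decomposeFin.symm (p, τ) q.1)
              - t * x (Equiv.Perm.decomposeFin.symm (p, τ) q.2)) /
            (x (Equiv.Perm.decomposeFin.symm (p, τ) q.1)
              - x (Equiv.Perm.decomposeFin.symm (p, τ) q.2))
        = (∏ q ∈ univ.erase p, (x p - t * x q) / (x p - x q)) *
            ∏ i ∈ range n, (1 - t ^ (i + 1)) / (1 - t) := by
      intro p
      set y : Fin n → K := fun j => x (Equiv.swap 0 p j.succ) with hy
      have hyinj : Function.Injective y :=
        fun a b hab => Fin.succ_injective n ((Equiv.swap 0 p).injective (hx hab))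
      have hstep1 : ∀ τ : Equiv.Perm (Fin n),
          ∏ q ∈ univ.filter (fun q : Fin (n+1) × Fin (n+1) => q.1 < q.2),
            (x (Equiv.Perm.decomposeFin.symm (p, τ) q.1)
              - t * x (Equiv.Perm.decomposeFin.symm (p, τ) q.2)) /
            (x (Equiv.Perm.decomposeFin.symm (p, τ) q.1)
              - x (Equiv.Perm.decomposeFin.symm (p, τ) q.2))
          = (∏ j : Fin n, (x p - t * y j) / (x p - y j)) *
              ∏ q ∈ univ.filter (fun q : Fin n × Fin n => q.1 < q.2),
                (y (τ q.1) - t * y (τ q.2)) / (y (τ q.1) - y (τ q.2)) := by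
        intro τ
        rw [prod_pairs_succ n (fun a b =>
          (x (Equiv.Perm.decomposeFin.symm (p, τ) a) - t * x (Equiv.Perm.decomposeFin.symm (p, τ) b)) /
          (x (Equiv.Perm.decomposeFin.symm (p, τ) a) - x (Equiv.Perm.decomposeFin.symm (p, τ) b)))]
        simp only [Equiv.Perm.decomposeFin_symm_apply_zero,
          Equiv.Perm.decomposeFin_symm_apply_succ]
        congr 1
        exact Equiv.prod_comp τ (fun j => (x p - t * y j) / (x p - y j))
      rw [Finset.sum_congr rfl fun τ _ => hstep1 τ, ← Finset.mul_sum, ih y hyinj]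
      congr 1
      have himg : (univ : Finset (Fin n)).image (fun j => Equiv.swap 0 p j.succ)
          = univ.erase p := by
        ext q
        simp only [Finset.mem_image, Finset.mem_erase, Finset.mem_univ, and_true, true_and]
        constructor
        · rintro ⟨j, rfl⟩ 
          intro hq
          have h0 : Equiv.swap 0 p (0 : Fin (n+1)) = p := Equiv.swap_apply_left 0 p
          have := (Equiv.swap 0 p).injective (hq.trans h0.symm)
          exact Fin.succ_ne_zero j this
        · intro hq
          have hq0 : Equiv.swap 0 p q ≠ 0 := by
            intro h
            apply hq
            have := congrArg (Equiv.swap 0 p) h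
            rw [Equiv.swap_apply_self, Equiv.swap_apply_left] at this
            exact this
          obtain ⟨j, hj⟩ := Fin.eq_succ_of_ne_zero hq0
          exact ⟨j, by rw [← hj, Equiv.swap_apply_self]⟩
      rw [← himg, Finset.prod_image (fun a _ b _ h =>
        Fin.succ_injective n ((Equiv.swap 0 p).injective h))]
    rw [Finset.sum_congr rfl fun p _ => step p, ← Finset.sum_mul]
    have hL := lagrange_sum t ht (univ : Finset (Fin (n+1))) x hx.injOn
    simp only [Finset.card_univ, Fintype.card_fin] at hL
    rw [hL, Finset.prod_range_succ]
    ring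

open Finset in
/-- Hall–Littlewood identity for the zero partition:
for distinct `x_1, …, x_r` in a field `K` and `t ≠ 1`,
`∑_{σ ∈ S_r} ∏_{i<j} (x_{σ(i)} - t x_{σ(j)})/(x_{σ(i)} - x_{σ(j)})
  = ∏_{i=1}^r (1 - t^i)/(1 - t)`. -/
theorem stmt_6 {K : Type*} [Field K] (r : ℕ) (hr : 1 ≤ r)
    (x : Fin r → K) (hx : Function.Injective x) (t : K) (ht : t ≠ 1) :
    ∑ σ : Equiv.Perm (Fin r),
      ∏ p ∈ univ.filter (fun p : Fin r × Fin r => p.1 < p.2),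
        (x (σ p.1) - t * x (σ p.2)) / (x (σ p.1) - x (σ p.2))
      = ∏ i ∈ range r, (1 - t ^ (i + 1)) / (1 - t) :=
  hall_littlewood_aux t ht r x hx
end

section
/- For distinct complex numbers λ_1, …, λ_r (i.e., with q^{-2λ_i} pairwise distinct) and h(λ) = q(q^{-2λ} - q^{-2})/(q^{-2λ} - 1), the sum A = ∑_{ρ ∈ S_r} ∏_{k<l} (-h(λ_{ρ(k)} - λ_{ρ(l)})) equals (-q)^{r(r-1)/2} ∏_{k=1}^r (1 - q^{-2k})/(1 - q^{-2}); in particular it does not depend on λ_1, …, λ_r. -/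
open Finset Polynomial

open Finset Polynomial

lemma key_sum (n : ℕ) (t : ℂ) (ht : t ≠ 1) (u : Fin n → ℂ)
    (hu : Function.Injective u) (hu0 : ∀ i, u i ≠ 0) :
    ∑ i : Fin n, ∏ j ∈ univ.erase i, (u i - t * u j) / (u i - u j)
      = (1 - t ^ n) / (1 - t) := by
  rcases Nat.eq_zero_or_pos n with hn | hn
  · subst hn; simp
  have hOne : (1 : ℂ) - t ≠ 0 := sub_ne_zero_of_ne (Ne.symm ht)
  have hsub : ∀ i j : Fin n, i ≠ j → u i - u j ≠ 0 := fun i j hij =>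
    sub_ne_zero_of_ne (fun h => hij (hu h))
  -- rewrite each summand as (prod) * nodalWeight
  have hrw : ∀ i : Fin n, ∏ j ∈ univ.erase i, (u i - t * u j) / (u i - u j)
      = (∏ j ∈ univ.erase i, (u i - t * u j)) * Lagrange.nodalWeight univ u i := by
    intro i
    rw [Lagrange.nodalWeight, ← prod_mul_distrib]
    exact prod_congr rfl fun j _ => div_eq_mul_inv _ _
  simp_rw [hrw]
  have hinj : Set.InjOn u (univ : Finset (Fin n)) := hu.injOn
  set P : ℂ[X] := ∏ j : Fin n, (X - C (t * u j)) with hP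
  set N : ℂ[X] := Lagrange.nodal univ u with hN
  have hPm : P.Monic := monic_prod_of_monic _ _ fun j _ => monic_X_sub_C _
  have hNm : N.Monic := Lagrange.nodal_monic
  have hPd : P.degree = n := by
    rw [hP, degree_prod]
    rw [Finset.sum_congr rfl (fun j _ => degree_X_sub_C (t * u j))]
    simp
  have hNd : N.degree = n := by
    rw [hN, Lagrange.degree_nodal]; simp
  have hdeg : (P - N).degree < (#(univ : Finset (Fin n)) : ℕ) := by
    have h := degree_sub_lt (hPd.trans hNd.symm) hPm.ne_zero (by
      rw [hPm.leadingCoeff, hNm.leadingCoeff])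
    rw [hPd] at h
    rw [card_univ, Fintype.card_fin]
    exact h
  have hinterp := Lagrange.eq_interpolate (f := P - N) hinj hdeg
  have hx : ∀ i ∈ (univ : Finset (Fin n)), (0 : ℂ) ≠ u i := fun i _ => (hu0 i).symm
  have heval := congrArg (Polynomial.eval 0) hinterp
  rw [Lagrange.eval_interpolate_not_at_node _ hx] at heval
  -- compute the pieces
  have hPe : ∀ x : ℂ, P.eval x = ∏ j : Fin n, (x - t * u j) := by
    intro x; rw [hP, eval_prod]; simp
  have hNe : ∀ x : ℂ, N.eval x = ∏ j : Fin n, (x - u j) := by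
    intro x; rw [hN, Lagrange.eval_nodal]
  have hfnode : ∀ i : Fin n, (P - N).eval (u i) = ∏ j : Fin n, (u i - t * u j) := by
    intro i
    rw [eval_sub, hPe, hNe,
      show (∏ j : Fin n, (u i - u j)) = 0 from prod_eq_zero (mem_univ i) (sub_self _), sub_zero]
  have hfsplit : ∀ i : Fin n, (∏ j : Fin n, (u i - t * u j))
      = (1 - t) * u i * ∏ j ∈ univ.erase i, (u i - t * u j) := by
    intro i
    rw [← mul_prod_erase univ _ (mem_univ i)]
    ring
  set S : ℂ := ∑ i : Fin n, (∏ j ∈ univ.erase i, (u i - t * u j)) * Lagrange.nodalWeight univ u i with hS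
  set Q : ℂ := ∏ j : Fin n, u j with hQ
  have hQ0 : Q ≠ 0 := prod_ne_zero_iff.mpr fun j _ => hu0 j
  have h1 : (P - N).eval 0 = (-1) ^ n * (t ^ n * Q) - (-1 : ℂ) ^ n * Q := by
    rw [eval_sub, hPe, hNe]
    rw [show (∏ j : Fin n, ((0:ℂ) - t * u j)) = ∏ j : Fin n, (-1) * (t * u j) by
      exact prod_congr rfl fun j _ => by ring]
    rw [show (∏ j : Fin n, ((0:ℂ) - u j)) = ∏ j : Fin n, (-1) * (u j) by
      exact prod_congr rfl fun j _ => by ring]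
    rw [prod_mul_distrib, prod_mul_distrib, prod_mul_distrib, prod_const, prod_const]
    simp only [card_univ, Fintype.card_fin, hQ]
  have h2 : N.eval 0 = (-1 : ℂ) ^ n * Q := by
    rw [hNe]
    rw [show (∏ j : Fin n, ((0:ℂ) - u j)) = ∏ j : Fin n, (-1) * (u j) by
      exact prod_congr rfl fun j _ => by ring]
    rw [prod_mul_distrib]; simp [hQ]
  have h3 : (∑ i : Fin n, Lagrange.nodalWeight univ u i * ((0:ℂ) - u i)⁻¹ * (P - N).eval (u i))
      = -((1 - t) * S) := by
    rw [hS, Finset.mul_sum, ← Finset.sum_neg_distrib]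
    refine Finset.sum_congr rfl fun i _ => ?_
    rw [hfnode, hfsplit]
    have : ((0:ℂ) - u i)⁻¹ = -(u i)⁻¹ := by rw [zero_sub, neg_inv]
    rw [this]
    have h5 : (u i : ℂ) ≠ 0 := hu0 i
    field_simp
  rw [h3, h1, h2] at heval
  have hne : ((-1 : ℂ) ^ n * Q) ≠ 0 := by
    apply mul_ne_zero _ hQ0
    exact pow_ne_zero _ (by norm_num)
  have hS' : t ^ n - 1 = -((1 - t) * S) := by
    have h6 : ((-1:ℂ)^n * Q) * (t ^ n - 1) = ((-1:ℂ)^n * Q) * -((1 - t) * S) := by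
      linear_combination heval
    exact mul_left_cancel₀ hne h6
  rw [eq_div_iff hOne]
  linear_combination hS' 

lemma prod_pairs {M : Type*} [CommMonoid M] (n : ℕ) (g : Fin n → Fin n → M) :
    ∏ p ∈ univ.filter (fun p : Fin n × Fin n => p.1 < p.2), g p.1 p.2
      = ∏ i : Fin n, ∏ j ∈ Ioi i, g i j := by
  rw [Finset.prod_sigma']
  refine Finset.prod_nbij' (fun p => ⟨p.1, p.2⟩) (fun p => (p.1, p.2)) ?_ ?_ ?_ ?_ ?_ <;>
    simp [Finset.mem_sigma]

lemma prod_pairs' {M : Type*} [CommMonoid M] (n : ℕ) (f : Fin n × Fin n → M) :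
    ∏ p ∈ univ.filter (fun p : Fin n × Fin n => p.1 < p.2), f p
      = ∏ i : Fin n, ∏ j ∈ Ioi i, f (i, j) := by
  rw [← prod_pairs n (fun a b => f (a, b))]

lemma prod_erase_reindex {M : Type*} [CommMonoid M] (n : ℕ) (i : Fin (n + 1))
    (f : Fin (n + 1) → M) :
    ∏ m : Fin n, f (Equiv.swap 0 i m.succ) = ∏ j ∈ univ.erase i, f j := by
  refine Finset.prod_nbij (fun m => Equiv.swap 0 i m.succ) ?_ ?_ ?_ ?_
  · intro m _
    simp only [mem_erase, mem_univ, and_true]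
    intro h
    have h0 : m.succ = Equiv.swap 0 i i := by
      have := congrArg (Equiv.swap 0 i) h
      rwa [Equiv.swap_apply_self] at this
    rw [Equiv.swap_apply_right] at h0
    exact Fin.succ_ne_zero m h0
  · intro a _ b _ h
    exact Fin.succ_injective _ (Equiv.injective _ h)
  · intro j hj
    rw [coe_erase, Set.mem_diff] at hj
    have hj' : Equiv.swap 0 i j ≠ 0 := by
      intro h
      have h0 : j = Equiv.swap 0 i 0 := by
        have := congrArg (Equiv.swap 0 i) h
        rwa [Equiv.swap_apply_self] at this
      rw [Equiv.swap_apply_left] at h0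
      exact hj.2 (by simp [h0])
    obtain ⟨m, hm⟩ := Fin.exists_succ_eq.mpr hj'
    exact ⟨m, by simp, by simp only []; rw [hm, Equiv.swap_apply_self]⟩
  · intros; rfl

lemma main_sum (t : ℂ) (ht : t ≠ 1) :
    ∀ (n : ℕ) (u : Fin n → ℂ), Function.Injective u → (∀ i, u i ≠ 0) →
    (∑ ρ : Equiv.Perm (Fin n),
      ∏ p ∈ univ.filter (fun p : Fin n × Fin n => p.1 < p.2),
        (u (ρ p.1) - t * u (ρ p.2)) / (u (ρ p.1) - u (ρ p.2)))
      = ∏ k ∈ range n, (1 - t ^ (k + 1)) / (1 - t) := by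
  intro n
  induction n with
  | zero =>
    intro u _ _
    simp
  | succ n ih =>
    intro u hu hu0
    rw [← Equiv.sum_comp Equiv.Perm.decomposeFin.symm, Fintype.sum_prod_type]
    have hterm : ∀ (i : Fin (n + 1)) (e : Equiv.Perm (Fin n)),
        (∏ p ∈ univ.filter (fun p : Fin (n+1) × Fin (n+1) => p.1 < p.2),
          (u (Equiv.Perm.decomposeFin.symm (i, e) p.1)
              - t * u (Equiv.Perm.decomposeFin.symm (i, e) p.2)) /
            (u (Equiv.Perm.decomposeFin.symm (i, e) p.1)
              - u (Equiv.Perm.decomposeFin.symm (i, e) p.2)))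
        = (∏ j ∈ univ.erase i, (u i - t * u j) / (u i - u j))
          * ∏ p ∈ univ.filter (fun p : Fin n × Fin n => p.1 < p.2),
              ((fun m => u (Equiv.swap 0 i m.succ)) (e p.1)
                  - t * (fun m => u (Equiv.swap 0 i m.succ)) (e p.2)) /
                ((fun m => u (Equiv.swap 0 i m.succ)) (e p.1)
                  - (fun m => u (Equiv.swap 0 i m.succ)) (e p.2)) := by
      intro i e
      rw [prod_pairs', Fin.prod_univ_succ]
      congr 1
      · rw [Fin.prod_Ioi_zero]
        simp only [Equiv.Perm.decomposeFin_symm_apply_zero,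
          Equiv.Perm.decomposeFin_symm_apply_succ]
        rw [Equiv.prod_comp e (fun m => (u i - t * u (Equiv.swap 0 i m.succ)) /
          (u i - u (Equiv.swap 0 i m.succ)))]
        exact prod_erase_reindex n i (fun j => (u i - t * u j) / (u i - u j))
      · rw [prod_pairs']
        refine Finset.prod_congr rfl fun k _ => ?_
        rw [Fin.prod_Ioi_succ]
        refine Finset.prod_congr rfl fun l _ => ?_
        simp only [Equiv.Perm.decomposeFin_symm_apply_succ]
    calc (∑ i : Fin (n+1), ∑ e : Equiv.Perm (Fin n), _)
        = ∑ i : Fin (n+1), (∏ j ∈ univ.erase i, (u i - t * u j) / (u i - u j))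
            * ∏ k ∈ range n, (1 - t ^ (k + 1)) / (1 - t) := by
          refine Finset.sum_congr rfl fun i _ => ?_
          rw [Finset.sum_congr rfl fun e _ => hterm i e, ← Finset.mul_sum]
          congr 1
          refine ih (fun m => u (Equiv.swap 0 i m.succ)) ?_ (fun m => hu0 _)
          intro a b hab
          exact Fin.succ_injective _ (Equiv.injective _ (hu hab))
      _ = ∏ k ∈ range (n + 1), (1 - t ^ (k + 1)) / (1 - t) := by
          rw [← Finset.sum_mul, key_sum (n+1) t ht u hu hu0, prod_range_succ]
          ring

open Finset in
/-- for pairwise distinct nonzero `u_i = q^{-2λ_i}`, with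
`-h(λ_i - λ_j) = -q (u_i - q^{-2}u_j)/(u_i - u_j)`,
`∑_{ρ ∈ S_r} ∏_{k<l} (-q)(u_{ρ(k)} - q^{-2}u_{ρ(l)})/(u_{ρ(k)} - u_{ρ(l)})
  = (-q)^{r(r-1)/2} ∏_{k=1}^r (1 - q^{-2k})/(1 - q^{-2})`;
in particular the sum does not depend on `λ_1, …, λ_r`. -/
theorem stmt_7 (r : ℕ) (q : ℂ) (hq : q ≠ 0)
    (hqk : ∀ k : ℕ, 1 ≤ k → k ≤ r → q ^ (2 * k) ≠ 1)
    (u : Fin r → ℂ) (hu : Function.Injective u) (hu0 : ∀ i, u i ≠ 0) :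
    ∑ ρ : Equiv.Perm (Fin r),
      ∏ p ∈ univ.filter (fun p : Fin r × Fin r => p.1 < p.2),
        (-q) * (u (ρ p.1) - (q ^ 2)⁻¹ * u (ρ p.2)) / (u (ρ p.1) - u (ρ p.2))
      = (-q) ^ (r * (r - 1) / 2) *
          ∏ k ∈ range r, (1 - ((q ^ 2)⁻¹) ^ (k + 1)) / (1 - (q ^ 2)⁻¹) := by
  rcases Nat.eq_zero_or_pos r with h0 | hr
  · subst h0
    simp
  have hq2 : q ^ 2 ≠ 1 := by simpa using hqk 1 le_rfl hr
  have ht : ((q ^ 2)⁻¹ : ℂ) ≠ 1 := fun h => hq2 (inv_eq_one.mp h)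
  have hcard : #(univ.filter (fun p : Fin r × Fin r => p.1 < p.2)) = r * (r - 1) / 2 := by
    have h1 : #(univ.filter (fun p : Fin r × Fin r => p.1 < p.2))
        = #((univ : Finset (Fin r)).sigma fun i => Ioi i) := by
      refine Finset.card_bij' (fun p _ => ⟨p.1, p.2⟩) (fun p _ => (p.1, p.2)) ?_ ?_ ?_ ?_ <;>
        simp [Finset.mem_sigma]
    rw [h1, Finset.card_sigma]
    have h2 : ∀ i : Fin r, #(Ioi i) = r - 1 - (i : ℕ) := fun i => Fin.card_Ioi i
    rw [Finset.sum_congr rfl fun i _ => h2 i,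
      Fin.sum_univ_eq_sum_range (fun k => r - 1 - k) r,
      Finset.sum_range_reflect (fun k => k) r, Finset.sum_range_id]
  have hsummand : ∀ ρ : Equiv.Perm (Fin r),
      (∏ p ∈ univ.filter (fun p : Fin r × Fin r => p.1 < p.2),
        (-q) * (u (ρ p.1) - (q ^ 2)⁻¹ * u (ρ p.2)) / (u (ρ p.1) - u (ρ p.2)))
      = (-q) ^ (r * (r - 1) / 2) *
          ∏ p ∈ univ.filter (fun p : Fin r × Fin r => p.1 < p.2),
            (u (ρ p.1) - (q ^ 2)⁻¹ * u (ρ p.2)) / (u (ρ p.1) - u (ρ p.2)) := by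
    intro ρ
    rw [← hcard, ← Finset.prod_const, ← Finset.prod_mul_distrib]
    exact Finset.prod_congr rfl fun p _ => mul_div_assoc _ _ _
  rw [Finset.sum_congr rfl fun ρ _ => hsummand ρ, ← Finset.mul_sum,
    main_sum ((q ^ 2)⁻¹) ht r u hu hu0]
end

section
/- In the algebra W generated over the field M of meromorphic functions on ℂ^n by w_1, …, w_n with relations w_i² = 0, w_j w_i = -h(λ_j - λ_i) w_i w_j for i < j, and f(λ)w_i = w_i f(λ + e_i), the monomials w_I = w_{i_1}⋯w_{i_r} over ordered subsets I = {i_1 < ⋯ < i_r} of {1,…,n} form a basis; in particular dim_M W = 2^n. -/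
/- Throughout, the field `M` of meromorphic functions of `λ ∈ ℂ^n` entering the
dynamical quantum group relations is modelled concretely as the field of rational
functions in the variables `x_i = q^{-2λ_i}`: all coefficient functions appearing in
the relations (the functions `h(λ_a - λ_b)`, `g(λ_a - λ_b)`) are of this form, and the
shift `λ ↦ λ + e_i` corresponds to the field automorphism scaling `x_i` by `q^{-2}`. -/

noncomputable section

/-- The coefficient field: rational functions in `x_1, …, x_n`, `x_i = q^{-2λ_i}`. -/
abbrev MF (n : ℕ) := FractionRing (MvPolynomial (Fin n) ℂ)

/-- The variable `x_i`, modelling `q^{-2λ_i}`. -/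
def xv (n : ℕ) (i : Fin n) : MF n :=
  algebraMap (MvPolynomial (Fin n) ℂ) (MF n) (MvPolynomial.X i)

/-- `hE a b` models `h(λ_a - λ_b) = q (q^{-2(λ_a-λ_b)} - q^{-2})/(q^{-2(λ_a-λ_b)} - 1)
  = q (x_a - q^{-2} x_b)/(x_a - x_b)`. -/
def hE (n : ℕ) (q : ℂ) (a b : Fin n) : MF n :=
  algebraMap ℂ (MF n) q * (xv n a - algebraMap ℂ (MF n) ((q ^ 2)⁻¹) * xv n b)
    / (xv n a - xv n b)

/-- `gE a b` models `g(λ_a - λ_b) = h(λ_a - λ_b) h(λ_b - λ_a)`. -/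
def gE (n : ℕ) (q : ℂ) (a b : Fin n) : MF n := hE n q a b * hE n q b a

/-- Scaling each variable `x_j` by the constant `c j`. -/
def scaleHom (n : ℕ) (c : Fin n → ℂ) :
    MvPolynomial (Fin n) ℂ →ₐ[ℂ] MvPolynomial (Fin n) ℂ :=
  MvPolynomial.aeval fun j => MvPolynomial.C (c j) * MvPolynomial.X j

/-- Scaling the variables by nonzero constants, as an algebra automorphism. -/
def scaleEquiv (n : ℕ) (c : Fin n → ℂ) (hc : ∀ j, c j ≠ 0) :
    MvPolynomial (Fin n) ℂ ≃ₐ[ℂ] MvPolynomial (Fin n) ℂ :=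
  AlgEquiv.ofAlgHom (scaleHom n c) (scaleHom n fun j => (c j)⁻¹)
    (by
      apply MvPolynomial.algHom_ext
      intro j
      simp only [scaleHom, AlgHom.coe_comp, Function.comp_apply, MvPolynomial.aeval_X, map_mul,
        MvPolynomial.aeval_C, MvPolynomial.algebraMap_eq, AlgHom.coe_id, id_eq]
      rw [← mul_assoc, ← map_mul, inv_mul_cancel₀ (hc j), MvPolynomial.C_1, one_mul])
    (by
      apply MvPolynomial.algHom_ext
      intro j
      simp only [scaleHom, AlgHom.coe_comp, Function.comp_apply, MvPolynomial.aeval_X, map_mul,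
        MvPolynomial.aeval_C, MvPolynomial.algebraMap_eq, AlgHom.coe_id, id_eq]
      rw [← mul_assoc, ← map_mul, mul_inv_cancel₀ (hc j), MvPolynomial.C_1, one_mul])

/-- The shift `T_{e_i} : f(λ) ↦ f(λ + e_i)`, modelled as the field automorphism of
`MF n` scaling the variable `x_i = q^{-2λ_i}` by `q^{-2}`. -/
def TShift (n : ℕ) (q : ℂ) (hq : q ≠ 0) (i : Fin n) : MF n ≃+* MF n :=
  IsFractionRing.ringEquivOfRingEquiv
    (scaleEquiv n (fun j => if j = i then (q ^ 2)⁻¹ else 1)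
      (by
        intro j
        try dsimp only
        split_ifs
        · exact inv_ne_zero (pow_ne_zero _ hq)
        · exact one_ne_zero)).toRingEquiv

end

noncomputable section

/-- Generators of the dynamical exterior algebra `W`: the `w_i` and the
coefficient functions `f(λ) ∈ M`. -/
inductive WGen (n : ℕ) : Type
  | w : Fin n → WGen n
  | fn : MF n → WGen n

open FreeAlgebra in
/-- The defining relations of `W`: the copy of `M` is embedded as a subalgebra,
`w_i² = 0`, `w_j w_i = -h(λ_j - λ_i) w_i w_j` for `i < j`, and
`f(λ) w_i = w_i f(λ + e_i)`. -/
inductive WRel (n : ℕ) (q : ℂ) (hq : q ≠ 0) :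
    FreeAlgebra ℂ (WGen n) → FreeAlgebra ℂ (WGen n) → Prop
  | fn_one : WRel n q hq (ι ℂ (WGen.fn 1)) 1
  | fn_smul (c : ℂ) (k : MF n) :
      WRel n q hq (ι ℂ (WGen.fn (c • k))) (c • ι ℂ (WGen.fn k))
  | fn_add (k l : MF n) :
      WRel n q hq (ι ℂ (WGen.fn (k + l))) (ι ℂ (WGen.fn k) + ι ℂ (WGen.fn l))
  | fn_mul (k l : MF n) :
      WRel n q hq (ι ℂ (WGen.fn (k * l))) (ι ℂ (WGen.fn k) * ι ℂ (WGen.fn l))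
  | w_sq (i : Fin n) : WRel n q hq (ι ℂ (WGen.w i) * ι ℂ (WGen.w i)) 0
  | w_comm {i j : Fin n} (hij : i < j) :
      WRel n q hq (ι ℂ (WGen.w j) * ι ℂ (WGen.w i))
        (-(ι ℂ (WGen.fn (hE n q j i)) * (ι ℂ (WGen.w i) * ι ℂ (WGen.w j))))
  | w_shift (k : MF n) (i : Fin n) :
      WRel n q hq (ι ℂ (WGen.fn k) * ι ℂ (WGen.w i))
        (ι ℂ (WGen.w i) * ι ℂ (WGen.fn (TShift n q hq i k)))

/-- The dynamical exterior algebra `W`. -/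
abbrev WAlg (n : ℕ) (q : ℂ) (hq : q ≠ 0) := RingQuot (WRel n q hq)

/-- The embedding `μ_W : M → W` of the coefficient functions. -/
def μW (n : ℕ) (q : ℂ) (hq : q ≠ 0) (k : MF n) : WAlg n q hq :=
  RingQuot.mkRingHom (WRel n q hq) (FreeAlgebra.ι ℂ (WGen.fn k))

/-- The generator `w_i ∈ W`. -/
def wg (n : ℕ) (q : ℂ) (hq : q ≠ 0) (i : Fin n) : WAlg n q hq :=
  RingQuot.mkRingHom (WRel n q hq) (FreeAlgebra.ι ℂ (WGen.w i))

/-- `w_I = w_{i_1} ⋯ w_{i_r}` for an ordered subset `I = {i_1 < ⋯ < i_r}`. -/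
def wI (n : ℕ) (q : ℂ) (hq : q ≠ 0) (I : Finset (Fin n)) : WAlg n q hq :=
  ((I.sort (· ≤ ·)).map (wg n q hq)).prod

end
noncomputable section Aux
namespace S9
variable (n : ℕ) (q : ℂ) (hq : q ≠ 0)

lemma tshift_algebraMap (i : Fin n) (p : MvPolynomial (Fin n) ℂ) :
    TShift n q hq i (algebraMap (MvPolynomial (Fin n) ℂ) (MF n) p)
      = algebraMap (MvPolynomial (Fin n) ℂ) (MF n)
        (scaleEquiv n (fun j => if j = i then (q ^ 2)⁻¹ else 1)
          (by intro j; (try dsimp only); split_ifs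
              · exact inv_ne_zero (pow_ne_zero _ hq)
              · exact one_ne_zero) p) := by
  simp [TShift, IsFractionRing.ringEquivOfRingEquiv_algebraMap]

lemma algebraMap_C (z : ℂ) :
    algebraMap (MvPolynomial (Fin n) ℂ) (MF n) (MvPolynomial.C z)
      = algebraMap ℂ (MF n) z := by
  rw [IsScalarTower.algebraMap_apply ℂ (MvPolynomial (Fin n) ℂ) (MF n)]
  rfl

lemma tshift_C (i : Fin n) (z : ℂ) :
    TShift n q hq i (algebraMap ℂ (MF n) z) = algebraMap ℂ (MF n) z := by
  rw [← algebraMap_C, tshift_algebraMap]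
  congr 1
  simp [scaleEquiv, scaleHom]

lemma tshift_xv_ne (i j : Fin n) (hij : j ≠ i) :
    TShift n q hq i (xv n j) = xv n j := by
  rw [xv, tshift_algebraMap]
  congr 1
  simp [scaleEquiv, scaleHom, hij]

end S9
end Aux
noncomputable section Aux2
namespace S9
variable (n : ℕ) (q : ℂ) (hq : q ≠ 0)

lemma tshift_xv (i j : Fin n) :
    TShift n q hq i (xv n j)
      = (if j = i then algebraMap ℂ (MF n) ((q ^ 2)⁻¹) else 1) * xv n j := by
  rw [xv, tshift_algebraMap]
  by_cases h : j = i
  · simp only [h, if_pos]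
    rw [← algebraMap_C, ← map_mul]
    congr 1
    simp [scaleEquiv, scaleHom]
  · simp only [h, if_neg, not_false_iff, one_mul]
    congr 1
    simp [scaleEquiv, scaleHom, h]

lemma tshift_hE (m p r : Fin n) (hp : p ≠ m) (hr : r ≠ m) :
    TShift n q hq m (hE n q p r) = hE n q p r := by
  unfold hE
  rw [map_div₀, map_mul, map_sub, map_sub, map_mul, tshift_C, tshift_C,
    tshift_xv, tshift_xv]
  simp [hp, hr]

lemma tshift_xv2 (i j p : Fin n) :
    TShift n q hq i (TShift n q hq j (xv n p))
      = (if p = j then algebraMap ℂ (MF n) ((q ^ 2)⁻¹) else 1)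
        * ((if p = i then algebraMap ℂ (MF n) ((q ^ 2)⁻¹) else 1) * xv n p) := by
  rw [tshift_xv, map_mul, tshift_xv]
  congr 1
  split_ifs
  · exact tshift_C n q hq i _
  · exact map_one _

lemma tshift_comm (i j : Fin n) (x : MF n) :
    TShift n q hq i (TShift n q hq j x) = TShift n q hq j (TShift n q hq i x) := by
  have : ((TShift n q hq i : MF n →+* MF n).comp (TShift n q hq j : MF n →+* MF n))
      = ((TShift n q hq j : MF n →+* MF n).comp (TShift n q hq i : MF n →+* MF n)) := by
    apply IsLocalization.ringHom_ext (nonZeroDivisors (MvPolynomial (Fin n) ℂ))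
    rw [RingHom.comp_assoc, RingHom.comp_assoc]
    refine MvPolynomial.ringHom_ext (fun z => ?_) (fun p => ?_) <;>
      simp only [RingHom.coe_comp, Function.comp_apply, RingHom.coe_coe]
    · simp only [algebraMap_C, tshift_C]
    rw [show algebraMap (MvPolynomial (Fin n) ℂ) (MF n) (MvPolynomial.X p) = xv n p from rfl,
      tshift_xv2, tshift_xv2]
    ring
  exact congrArg (fun f => f x) (congrArg (fun f => f.toFun) this)

/-- The inverse shift. -/
def τ (i : Fin n) : MF n ≃+* MF n := (TShift n q hq i).symm

lemma tau_tshift (i : Fin n) (x : MF n) : τ n q hq i (TShift n q hq i x) = x :=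
  (TShift n q hq i).symm_apply_apply x

lemma tshift_tau (i : Fin n) (x : MF n) : TShift n q hq i (τ n q hq i x) = x :=
  (TShift n q hq i).apply_symm_apply x

lemma tau_C (i : Fin n) (z : ℂ) :
    τ n q hq i (algebraMap ℂ (MF n) z) = algebraMap ℂ (MF n) z := by
  apply (TShift n q hq i).injective
  rw [tshift_tau, tshift_C]

lemma tau_hE (m p r : Fin n) (hp : p ≠ m) (hr : r ≠ m) :
    τ n q hq m (hE n q p r) = hE n q p r := by
  apply (TShift n q hq m).injective
  rw [tshift_tau, tshift_hE n q hq m p r hp hr]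

lemma tau_comm (i j : Fin n) (x : MF n) :
    τ n q hq i (τ n q hq j x) = τ n q hq j (τ n q hq i x) := by
  apply (TShift n q hq i).injective
  rw [tshift_tau]
  apply (TShift n q hq j).injective
  rw [tshift_tau, ← tshift_comm, tshift_tau, tshift_tau]

lemma tau_smul (i : Fin n) (z : ℂ) (x : MF n) :
    τ n q hq i (z • x) = z • τ n q hq i x := by
  have h1 : z • x = algebraMap ℂ (MF n) z * x := Algebra.smul_def z x
  have h2 : z • τ n q hq i x = algebraMap ℂ (MF n) z * τ n q hq i x := Algebra.smul_def z (τ n q hq i x)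
  rw [h1, h2, map_mul, tau_C]

end S9
end Aux2
noncomputable section Aux3
namespace S9
set_option synthInstance.maxHeartbeats 1000000
set_option maxHeartbeats 1000000

variable (n : ℕ) (q : ℂ) (hq : q ≠ 0)

lemma rel_mk {x y : FreeAlgebra ℂ (WGen n)} (h : WRel n q hq x y) :
    RingQuot.mkRingHom (WRel n q hq) x = RingQuot.mkRingHom (WRel n q hq) y :=
  RingQuot.mkRingHom_rel h

lemma mu_one : μW n q hq 1 = 1 := by
  rw [μW, rel_mk n q hq (WRel.fn_one), map_one]

lemma mu_mul (k l : MF n) : μW n q hq (k * l) = μW n q hq k * μW n q hq l := by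
  rw [μW, rel_mk n q hq (WRel.fn_mul k l), map_mul]; rfl

lemma mu_add (k l : MF n) : μW n q hq (k + l) = μW n q hq k + μW n q hq l := by
  rw [μW, rel_mk n q hq (WRel.fn_add k l), map_add]; rfl

lemma mu_eq_alg (k : MF n) :
    μW n q hq k = RingQuot.mkAlgHom ℂ (WRel n q hq) (FreeAlgebra.ι ℂ (WGen.fn k)) := by
  rw [μW, ← RingQuot.mkAlgHom_coe ℂ]; rfl

lemma mu_smul (z : ℂ) (k : MF n) : μW n q hq (z • k) = z • μW n q hq k := by
  rw [mu_eq_alg, mu_eq_alg, ← map_smul (RingQuot.mkAlgHom ℂ (WRel n q hq))]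
  exact RingQuot.mkAlgHom_rel ℂ (WRel.fn_smul z k)

lemma mu_zero : μW n q hq 0 = 0 := by
  have h := mu_smul n q hq 0 0
  rw [show (0:ℂ) • (0 : MF n) = 0 from zero_smul ℂ (0 : MF n),
    zero_smul ℂ (μW n q hq 0)] at h
  exact h

lemma wg_sq (i : Fin n) : wg n q hq i * wg n q hq i = 0 := by
  have := rel_mk n q hq (WRel.w_sq i)
  rw [map_mul, map_zero] at this
  exact this

lemma wg_comm {i j : Fin n} (hij : i < j) :
    wg n q hq j * wg n q hq i
      = -(μW n q hq (hE n q j i) * (wg n q hq i * wg n q hq j)) := by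
  have := rel_mk n q hq (WRel.w_comm hij)
  rw [map_mul, map_neg, map_mul, map_mul] at this
  exact this

lemma mu_w (k : MF n) (i : Fin n) :
    μW n q hq k * wg n q hq i = wg n q hq i * μW n q hq (TShift n q hq i k) := by
  have := rel_mk n q hq (WRel.w_shift k i)
  rw [map_mul, map_mul] at this
  exact this

lemma w_mu (k : MF n) (i : Fin n) :
    wg n q hq i * μW n q hq k = μW n q hq (τ n q hq i k) * wg n q hq i := by
  rw [mu_w n q hq (τ n q hq i k) i, tshift_tau]

end S9
end Aux3
noncomputable section Aux4
namespace S9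
variable (n : ℕ) (q : ℂ) (hq : q ≠ 0)

lemma mu_neg (k : MF n) : μW n q hq (-k) = -μW n q hq k := by
  have h2 : μW n q hq k + μW n q hq (-k) = 0 := by
    rw [← mu_add, add_neg_cancel, mu_zero]
  exact eq_neg_of_add_eq_zero_right h2

lemma wg_comm' {i j : Fin n} (hij : i < j) :
    wg n q hq j * wg n q hq i
      = μW n q hq (-hE n q j i) * (wg n q hq i * wg n q hq j) := by
  rw [wg_comm n q hq hij, mu_neg]
  exact (neg_mul (μW n q hq (hE n q j i)) (wg n q hq i * wg n q hq j)).symm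

/-- product of generators along a list -/
def wL (l : List (Fin n)) : WAlg n q hq := (l.map (wg n q hq)).prod

lemma wL_nil : wL n q hq [] = 1 := rfl

lemma wL_cons (a : Fin n) (l : List (Fin n)) :
    wL n q hq (a :: l) = wg n q hq a * wL n q hq l := by
  simp [wL]

lemma orderedInsert_of_le (i : Fin n) (l : List (Fin n)) (h : ∀ b ∈ l, i ≤ b) :
    List.orderedInsert (· ≤ ·) i l = i :: l := by
  cases l with
  | nil => rfl
  | cons b l => simp [List.orderedInsert, h b List.mem_cons_self]

lemma wL_mu (l : List (Fin n)) (k : MF n) :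
    ∃ k', wL n q hq l * μW n q hq k = μW n q hq k' * wL n q hq l := by
  induction l generalizing k with
  | nil => exact ⟨k, by rw [wL_nil, one_mul, mul_one]⟩
  | cons a l ih =>
    obtain ⟨k', hk'⟩ := ih k
    refine ⟨τ n q hq a k', ?_⟩
    rw [wL_cons, mul_assoc, hk', ← mul_assoc, w_mu, mul_assoc]

lemma wL_w (l : List (Fin n)) (hl : l.Pairwise (· < ·)) (i : Fin n) (hi : i ∉ l) :
    ∃ f, wL n q hq l * wg n q hq i
      = μW n q hq f * wL n q hq (List.orderedInsert (· ≤ ·) i l) := by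
  induction l with
  | nil =>
    exact ⟨1, by rw [wL_nil, one_mul, mu_one, one_mul, List.orderedInsert, wL_cons, wL_nil,
      mul_one]⟩
  | cons a l ih =>
    rw [List.pairwise_cons] at hl
    have hia : i ≠ a := fun h => hi (h ▸ List.mem_cons_self)
    have hil : i ∉ l := fun h => hi (List.mem_cons_of_mem a h)
    obtain ⟨f, hf⟩ := ih hl.2 hil
    rcases lt_or_gt_of_ne hia with hlt | hgt
    · -- i < a : insert at front
      have hins : List.orderedInsert (· ≤ ·) i (a :: l) = i :: a :: l := by
        simp [List.orderedInsert, le_of_lt hlt]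
      have hinsl : List.orderedInsert (· ≤ ·) i l = i :: l :=
        orderedInsert_of_le n i l (fun b hb => le_of_lt (lt_trans hlt (hl.1 b hb)))
      refine ⟨τ n q hq a f * -hE n q a i, ?_⟩
      rw [hins, wL_cons, mul_assoc, hf, hinsl, ← mul_assoc, w_mu, mul_assoc, wL_cons,
        ← mul_assoc (wg n q hq a), wg_comm' n q hq hlt, wL_cons, wL_cons, mu_mul]
      simp only [mul_assoc]
    · -- a < i : recurse
      have hins : List.orderedInsert (· ≤ ·) i (a :: l) = a :: List.orderedInsert (· ≤ ·) i l := by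
        simp [List.orderedInsert, not_le.mpr hgt]
      refine ⟨τ n q hq a f, ?_⟩
      rw [hins, wL_cons, mul_assoc, hf, ← mul_assoc, w_mu, mul_assoc, wL_cons]

lemma wL_w_mem (l : List (Fin n)) (hl : l.Pairwise (· < ·)) (i : Fin n) (hi : i ∈ l) :
    wL n q hq l * wg n q hq i = 0 := by
  induction l with
  | nil => cases hi
  | cons a l ih =>
    rw [List.pairwise_cons] at hl
    rcases List.mem_cons.mp hi with rfl | hmem
    · have hil : i ∉ l := fun h => lt_irrefl i (hl.1 i h)
      obtain ⟨f, hf⟩ := wL_w n q hq l hl.2 i hil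
      have hinsl : List.orderedInsert (· ≤ ·) i l = i :: l :=
        orderedInsert_of_le n i l (fun b hb => le_of_lt (hl.1 b hb))
      rw [wL_cons, mul_assoc, hf, hinsl, ← mul_assoc, w_mu, wL_cons, mul_assoc, ← mul_assoc
        (wg n q hq i), wg_sq, zero_mul, mul_zero]
    · rw [wL_cons, mul_assoc, ih hl.2 hmem, mul_zero]

end S9
end Aux4
noncomputable section Aux5
namespace S9
open Finset
variable (n : ℕ) (q : ℂ) (hq : q ≠ 0)

lemma sort_insert_eq (i : Fin n) (S : Finset (Fin n)) (hi : i ∉ S) :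
    (insert i S).sort (· ≤ ·) = List.orderedInsert (· ≤ ·) i (S.sort (· ≤ ·)) := by
  refine List.Perm.eq_of_pairwise' (Finset.pairwise_sort _ _)
    ((Finset.pairwise_sort _ _).orderedInsert i _) ?_
  refine ((insert i S).sort_perm_toList _).trans ?_
  refine List.Perm.trans ?_ (List.perm_orderedInsert _ i _).symm
  refine List.Perm.trans ?_ (List.Perm.cons i (S.sort_perm_toList _).symm)
  -- (insert i S).toList ~ i :: S.toList
  exact Finset.toList_insert hi

lemma wI_eq_wL (S : Finset (Fin n)) : wI n q hq S = wL n q hq (S.sort (· ≤ ·)) := rfl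

lemma wI_mul_mu (S : Finset (Fin n)) (k : MF n) :
    ∃ k', wI n q hq S * μW n q hq k = μW n q hq k' * wI n q hq S :=
  wL_mu n q hq _ k

lemma wI_mul_wg_mem (S : Finset (Fin n)) (i : Fin n) (hi : i ∈ S) :
    wI n q hq S * wg n q hq i = 0 :=
  wL_w_mem n q hq _ (S.sortedLT_sort.pairwise) i ((Finset.mem_sort _).mpr hi)

lemma wI_mul_wg_notmem (S : Finset (Fin n)) (i : Fin n) (hi : i ∉ S) :
    ∃ f, wI n q hq S * wg n q hq i = μW n q hq f * wI n q hq (insert i S) := by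
  obtain ⟨f, hf⟩ := wL_w n q hq (S.sort (· ≤ ·)) (S.sortedLT_sort.pairwise) i
    (fun h => hi ((Finset.mem_sort _).mp h))
  exact ⟨f, by rw [wI_eq_wL, hf, wI_eq_wL, sort_insert_eq n i S hi]⟩

/-- an element is representable in the `w_I` basis form -/
def Rep (x : WAlg n q hq) : Prop :=
  ∃ c : Finset (Fin n) → MF n,
    x = ∑ I : Finset (Fin n), μW n q hq (c I) * wI n q hq I

lemma rep_single (k : MF n) (S : Finset (Fin n)) : Rep n q hq (μW n q hq k * wI n q hq S) := by
  refine ⟨fun I => if I = S then k else 0, ?_⟩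
  rw [Finset.sum_eq_single S]
  · simp
  · intro I _ hIS
    simp [hIS, mu_zero n q hq]
  · intro h; exact absurd (Finset.mem_univ S) h

lemma rep_add {x y : WAlg n q hq} (hx : Rep n q hq x) (hy : Rep n q hq y) :
    Rep n q hq (x + y) := by
  obtain ⟨c, rfl⟩ := hx; obtain ⟨d, rfl⟩ := hy
  refine ⟨fun I => c I + d I, ?_⟩
  rw [← Finset.sum_add_distrib]
  refine Finset.sum_congr rfl fun I _ => ?_
  rw [mu_add, add_mul]

lemma rep_mul_mu {x : WAlg n q hq} (hx : Rep n q hq x) (k : MF n) :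
    Rep n q hq (x * μW n q hq k) := by
  obtain ⟨c, rfl⟩ := hx
  refine ⟨fun I => c I * Classical.choose (wI_mul_mu n q hq I k), ?_⟩
  rw [Finset.sum_mul]
  refine Finset.sum_congr rfl fun I _ => ?_
  rw [mul_assoc, Classical.choose_spec (wI_mul_mu n q hq I k), ← mul_assoc, ← mu_mul]

lemma wI_mul_wg_choice (I : Finset (Fin n)) (i : Fin n) :
    ∃ f, i ∉ I → wI n q hq I * wg n q hq i = μW n q hq f * wI n q hq (insert i I) := by
  by_cases h : i ∈ I
  · exact ⟨0, fun h' => absurd h h'⟩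
  · obtain ⟨f, hf⟩ := wI_mul_wg_notmem n q hq I i h
    exact ⟨f, fun _ => hf⟩

lemma rep_mul_wg {x : WAlg n q hq} (hx : Rep n q hq x) (i : Fin n) :
    Rep n q hq (x * wg n q hq i) := by
  classical
  obtain ⟨c, rfl⟩ := hx
  set F : Finset (Fin n) → MF n :=
    fun I => Classical.choose (wI_mul_wg_choice n q hq I i) with hF
  refine ⟨fun J => if i ∈ J then c (J.erase i) * F (J.erase i) else 0, ?_⟩
  rw [Finset.sum_mul]
  have step : ∀ I : Finset (Fin n),
      μW n q hq (c I) * wI n q hq I * wg n q hq i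
        = if i ∉ I then μW n q hq (c I * F I) * wI n q hq (insert i I) else 0 := by
    intro I
    by_cases h : i ∈ I
    · rw [if_neg (not_not_intro h), mul_assoc, wI_mul_wg_mem n q hq I i h, mul_zero]
    · rw [if_pos h, mul_assoc,
        Classical.choose_spec (wI_mul_wg_choice n q hq I i) h, ← mul_assoc, ← mu_mul]
  calc (∑ I : Finset (Fin n), μW n q hq (c I) * wI n q hq I * wg n q hq i)
      = ∑ I : Finset (Fin n),
          (if i ∉ I then μW n q hq (c I * F I) * wI n q hq (insert i I) else 0) :=
        Finset.sum_congr rfl fun I _ => step I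
    _ = ∑ I ∈ Finset.univ.filter (fun I => i ∉ I),
          μW n q hq (c I * F I) * wI n q hq (insert i I) := (Finset.sum_filter _ _).symm
    _ = ∑ J ∈ Finset.univ.filter (fun J => i ∈ J),
          μW n q hq (c (J.erase i) * F (J.erase i)) * wI n q hq J := by
        refine Finset.sum_bij' (fun I _ => insert i I) (fun J _ => J.erase i) ?_ ?_ ?_ ?_ ?_
        · intro I hI
          simp only [Finset.mem_filter, Finset.mem_univ, true_and] at hI ⊢
          exact Finset.mem_insert_self i I
        · intro J hJ
          simp only [Finset.mem_filter, Finset.mem_univ, true_and] at hJ ⊢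
          exact Finset.notMem_erase i J
        · intro I hI
          simp only [Finset.mem_filter, Finset.mem_univ, true_and] at hI
          exact Finset.erase_insert hI
        · intro J hJ
          simp only [Finset.mem_filter, Finset.mem_univ, true_and] at hJ
          exact Finset.insert_erase hJ
        · intro I hI
          simp only [Finset.mem_filter, Finset.mem_univ, true_and] at hI
          rw [Finset.erase_insert hI]
    _ = ∑ J : Finset (Fin n),
          (if i ∈ J then μW n q hq (c (J.erase i) * F (J.erase i)) * wI n q hq J else 0) :=
        Finset.sum_filter _ _
    _ = ∑ J : Finset (Fin n),
          μW n q hq (if i ∈ J then c (J.erase i) * F (J.erase i) else 0) * wI n q hq J := by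
        refine Finset.sum_congr rfl fun J _ => ?_
        by_cases h : i ∈ J
        · rw [if_pos h, if_pos h]
        · rw [if_neg h, if_neg h, mu_zero, zero_mul]

lemma rep_mul_wL {x : WAlg n q hq} (hx : Rep n q hq x) (l : List (Fin n)) :
    Rep n q hq (x * wL n q hq l) := by
  induction l generalizing x with
  | nil => rw [wL_nil, mul_one]; exact hx
  | cons a l ih =>
    rw [wL_cons, ← mul_assoc]
    exact ih (rep_mul_wg n q hq hx a)

lemma rep_mul {x y : WAlg n q hq} (hx : Rep n q hq x) (hy : Rep n q hq y) :
    Rep n q hq (x * y) := by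
  obtain ⟨d, rfl⟩ := hy
  rw [Finset.mul_sum]
  refine Finset.sum_induction _ (Rep n q hq) (fun a b ha hb => rep_add n q hq ha hb) ?_ ?_
  · have h0 : (0 : WAlg n q hq) = μW n q hq 0 * wI n q hq ∅ := by rw [mu_zero, zero_mul]
    rw [h0]; exact rep_single n q hq 0 ∅
  · intro J _
    rw [← mul_assoc]
    exact rep_mul_wL n q hq (rep_mul_mu n q hq hx (d J)) (J.sort (· ≤ ·))

lemma mu_algebraMap (z : ℂ) :
    μW n q hq (algebraMap ℂ (MF n) z) = algebraMap ℂ (WAlg n q hq) z := by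
  have h1 : algebraMap ℂ (MF n) z = z • (1 : MF n) := (Algebra.algebraMap_eq_smul_one z)
  rw [h1, mu_smul, mu_one]
  exact (show algebraMap ℂ (WAlg n q hq) z = z • (1 : WAlg n q hq) from
    Algebra.algebraMap_eq_smul_one z).symm

lemma rep_all (x : WAlg n q hq) : Rep n q hq x := by
  obtain ⟨y, rfl⟩ := RingQuot.mkRingHom_surjective (WRel n q hq) x
  induction y using FreeAlgebra.induction with
  | grade0 z =>
    have : (RingQuot.mkRingHom (WRel n q hq)) (algebraMap ℂ (FreeAlgebra ℂ (WGen n)) z)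
        = μW n q hq (algebraMap ℂ (MF n) z) * wI n q hq ∅ := by
      rw [wI, Finset.sort_empty, List.map_nil, List.prod_nil, mul_one, mu_algebraMap]
      rw [← RingQuot.mkAlgHom_coe ℂ (WRel n q hq)]
      exact (RingQuot.mkAlgHom ℂ (WRel n q hq)).commutes z
    rw [this]; exact rep_single n q hq _ ∅
  | grade1 g =>
    cases g with
    | w i =>
      have : (RingQuot.mkRingHom (WRel n q hq)) (FreeAlgebra.ι ℂ (WGen.w i))
          = μW n q hq 1 * wI n q hq {i} := by
        rw [mu_one, one_mul, wI, Finset.sort_singleton, List.map_singleton, List.prod_singleton]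
        rfl
      rw [this]; exact rep_single n q hq 1 {i}
    | fn k =>
      have : (RingQuot.mkRingHom (WRel n q hq)) (FreeAlgebra.ι ℂ (WGen.fn k))
          = μW n q hq k * wI n q hq ∅ := by
        rw [wI, Finset.sort_empty, List.map_nil, List.prod_nil, mul_one]; rfl
      rw [this]; exact rep_single n q hq k ∅
  | mul a b ha hb => rw [map_mul]; exact rep_mul n q hq ha hb
  | add a b ha hb => rw [map_add]; exact rep_add n q hq ha hb

end S9
end Aux5
noncomputable section Aux6
namespace S9
open Finset
set_option synthInstance.maxHeartbeats 1000000
set_option maxHeartbeats 2000000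
variable (n : ℕ) (q : ℂ) (hq : q ≠ 0)

/-- coefficient in `w_i ⋅ w_I = μ(κ) w_{I∪i}` -/
def κ (i : Fin n) (S : Finset (Fin n)) : MF n :=
  ∏ j ∈ S.filter (· < i), (-(hE n q i j))

lemma κ_insert_gt (i j : Fin n) (S : Finset (Fin n)) (h : ¬ j < i) :
    κ n q i (insert j S) = κ n q i S := by
  rw [κ, κ, Finset.filter_insert, if_neg h]

lemma κ_insert_lt (i j : Fin n) (S : Finset (Fin n)) (h : j < i) (hj : j ∉ S) :
    κ n q i (insert j S) = -(hE n q i j) * κ n q i S := by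
  rw [κ, κ, Finset.filter_insert, if_pos h,
    Finset.prod_insert (fun hc => hj (Finset.mem_filter.mp hc).1)]

lemma κ_eq_one (i : Fin n) (S : Finset (Fin n)) (h : ∀ b ∈ S, i < b) :
    κ n q i S = 1 := by
  rw [κ, Finset.filter_false_of_mem, Finset.prod_empty]
  intro b hb
  exact not_lt_of_gt (h b hb)

lemma tau_κ (m i : Fin n) (S : Finset (Fin n)) (hmi : m ≠ i) (hms : m ∉ S) :
    τ n q hq m (κ n q i S) = κ n q i S := by
  rw [κ, map_prod]
  refine Finset.prod_congr rfl fun j hj => ?_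
  rw [map_neg, tau_hE n q hq m i j (Ne.symm hmi)
    (fun h => hms (h ▸ (Finset.mem_filter.mp hj).1))]

/-- the representation space -/
abbrev V := Finset (Fin n) → MF n

/-- action of a coefficient function -/
def Af (q0 : ℂ) (k : MF n) : V n →ₗ[ℂ] V n where
  toFun c := fun I => k * c I
  map_add' c d := by funext I; simp [mul_add]
  map_smul' z c := by funext I; simp [mul_smul_comm]

/-- action of the generator `w_i` -/
def Aw (i : Fin n) : V n →ₗ[ℂ] V n where
  toFun c := fun J =>
    if i ∈ J then τ n q hq i (c (J.erase i)) * κ n q i (J.erase i) else 0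
  map_add' c d := by
    funext J
    by_cases h : i ∈ J <;> simp [h, map_add, add_mul]
  map_smul' z c := by
    funext J
    by_cases h : i ∈ J
    · simp only [if_pos h, Pi.smul_apply, RingHom.id_apply]
      rw [tau_smul, smul_mul_assoc]
    · simp only [if_neg h, Pi.smul_apply, RingHom.id_apply]
      exact (smul_zero (M := ℂ) (A := MF n) z).symm

lemma Af_apply (k : MF n) (c : V n) (I : Finset (Fin n)) : Af n q k c I = k * c I := rfl

lemma Aw_apply (i : Fin n) (c : V n) (J : Finset (Fin n)) :
    Aw n q hq i c J
      = if i ∈ J then τ n q hq i (c (J.erase i)) * κ n q i (J.erase i) else 0 := rfl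

/-- generators to endomorphisms -/
def genMap : WGen n → Module.End ℂ (V n)
  | .w i => Aw n q hq i
  | .fn k => Af n q k

/-- the lift to the free algebra -/
def Fa : FreeAlgebra ℂ (WGen n) →ₐ[ℂ] Module.End ℂ (V n) :=
  FreeAlgebra.lift ℂ (genMap n q hq)

lemma Fa_ι (g : WGen n) : Fa n q hq (FreeAlgebra.ι ℂ g) = genMap n q hq g :=
  FreeAlgebra.lift_ι_apply _ _

lemma Fa_rel {x y : FreeAlgebra ℂ (WGen n)} (h : WRel n q hq x y) :
    Fa n q hq x = Fa n q hq y := by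
  induction h with
  | fn_one =>
    rw [map_one, Fa_ι]
    refine LinearMap.ext fun c => funext fun I => ?_
    simp only [genMap, Af_apply, Module.End.one_apply, one_mul]
  | fn_smul z k =>
    rw [map_smul, Fa_ι, Fa_ι]
    refine LinearMap.ext fun c => funext fun I => ?_
    simp only [genMap, LinearMap.smul_apply, Pi.smul_apply, Af_apply, smul_mul_assoc]
  | fn_add k l =>
    rw [map_add, Fa_ι, Fa_ι, Fa_ι]
    refine LinearMap.ext fun c => funext fun I => ?_
    simp only [genMap, LinearMap.add_apply, Pi.add_apply, Af_apply, add_mul]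
  | fn_mul k l =>
    rw [map_mul, Fa_ι, Fa_ι, Fa_ι]
    refine LinearMap.ext fun c => funext fun I => ?_
    simp only [genMap, Module.End.mul_apply, Af_apply, mul_assoc]
  | w_sq i =>
    rw [map_mul, map_zero, Fa_ι]
    refine LinearMap.ext fun c => funext fun J => ?_
    simp only [genMap, Module.End.mul_apply, LinearMap.zero_apply, Pi.zero_apply, Aw_apply]
    by_cases h : i ∈ J
    · rw [if_pos h, if_neg (Finset.notMem_erase i J), map_zero, zero_mul]
    · rw [if_neg h]
  | @w_comm i j hij =>
    rw [map_mul, map_neg, map_mul, map_mul, Fa_ι, Fa_ι, Fa_ι]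
    refine LinearMap.ext fun c => funext fun J => ?_
    have hij' : i ≠ j := ne_of_lt hij
    simp only [genMap, Module.End.mul_apply, LinearMap.neg_apply, Pi.neg_apply,
      Aw_apply, Af_apply]
    by_cases hjJ : j ∈ J
    · by_cases hiJ : i ∈ J
      · have hiJe : i ∈ J.erase j := Finset.mem_erase.mpr ⟨hij', hiJ⟩
        have hjJe : j ∈ J.erase i := Finset.mem_erase.mpr ⟨hij'.symm, hjJ⟩
        rw [if_pos hjJ, if_pos hiJe, if_pos hiJ, if_pos hjJe]
        have hK2 : (J.erase i).erase j = (J.erase j).erase i := Finset.erase_right_comm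
        have hiK : i ∉ (J.erase j).erase i := Finset.notMem_erase i _
        have hjK : j ∉ (J.erase j).erase i := by
          rw [← hK2]; exact Finset.notMem_erase j _
        have hJej : J.erase j = insert i ((J.erase j).erase i) :=
          (Finset.insert_erase hiJe).symm
        have hJei : J.erase i = insert j ((J.erase j).erase i) := by
          rw [← hK2]; exact (Finset.insert_erase hjJe).symm
        have e1 : κ n q j (J.erase j) = -hE n q j i * κ n q j ((J.erase j).erase i) := by
          conv_lhs => rw [hJej]
          exact κ_insert_lt n q j i _ hij hiK
        have e2 : κ n q i (J.erase i) = κ n q i ((J.erase j).erase i) := by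
          conv_lhs => rw [hJei]
          exact κ_insert_gt n q i j _ (not_lt_of_gt hij)
        rw [hK2, e1, e2, map_mul, tau_κ n q hq j i _ hij'.symm hjK,
          map_mul, tau_κ n q hq i j _ hij' hiK, tau_comm]
        ring
      · have h2 : i ∉ J.erase j := fun h => hiJ (Finset.mem_of_mem_erase h)
        rw [if_pos hjJ, if_neg h2, if_neg hiJ, map_zero, zero_mul, mul_zero, neg_zero]
    · by_cases hiJ : i ∈ J
      · have h2 : j ∉ J.erase i := fun h => hjJ (Finset.mem_of_mem_erase h)
        rw [if_neg hjJ, if_pos hiJ, if_neg h2, map_zero, zero_mul, mul_zero, neg_zero]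
      · rw [if_neg hjJ, if_neg hiJ, mul_zero, neg_zero]
  | w_shift k i =>
    rw [map_mul, map_mul, Fa_ι, Fa_ι, Fa_ι]
    refine LinearMap.ext fun c => funext fun J => ?_
    simp only [genMap, Module.End.mul_apply, Af_apply, Aw_apply]
    by_cases h : i ∈ J
    · rw [if_pos h, if_pos h, map_mul, tau_tshift]
      ring
    · rw [if_neg h, if_neg h, mul_zero]

/-- the representation of `W` -/
def ρ : WAlg n q hq →ₐ[ℂ] Module.End ℂ (V n) :=
  RingQuot.liftAlgHom ℂ ⟨Fa n q hq, fun _ _ h => Fa_rel n q hq h⟩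

lemma ρ_mk (x : FreeAlgebra ℂ (WGen n)) :
    ρ n q hq (RingQuot.mkRingHom (WRel n q hq) x) = Fa n q hq x := by
  rw [← RingQuot.mkAlgHom_coe ℂ (WRel n q hq)]
  exact RingQuot.liftAlgHom_mkAlgHom_apply ℂ _ _ _

lemma ρ_mu (k : MF n) : ρ n q hq (μW n q hq k) = Af n q k := by
  have h : μW n q hq k
      = RingQuot.mkRingHom (WRel n q hq) (FreeAlgebra.ι ℂ (WGen.fn k)) := rfl
  rw [h, ρ_mk, Fa_ι]
  rfl

lemma ρ_wg (i : Fin n) : ρ n q hq (wg n q hq i) = Aw n q hq i := by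
  have h : wg n q hq i
      = RingQuot.mkRingHom (WRel n q hq) (FreeAlgebra.ι ℂ (WGen.w i)) := rfl
  rw [h, ρ_mk, Fa_ι]
  rfl

/-- delta function basis vector -/
def δ (K : Finset (Fin n)) : V n := fun J => if J = K then 1 else 0

lemma Aw_δ (a : Fin n) (K : Finset (Fin n)) (ha : ∀ b ∈ K, a < b) :
    Aw n q hq a (δ n K) = δ n (insert a K) := by
  have haK : a ∉ K := fun h => lt_irrefl a (ha a h)
  funext J
  rw [Aw_apply]
  simp only [δ]
  by_cases h : a ∈ J
  · rw [if_pos h]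
    by_cases h2 : J.erase a = K
    · have hJ : J = insert a K := by rw [← h2, Finset.insert_erase h]
      rw [if_pos h2, if_pos hJ, map_one, one_mul, h2, κ_eq_one n q a K ha]
    · have hJ : J ≠ insert a K := fun hc => h2 (by rw [hc, Finset.erase_insert haK])
      rw [if_neg h2, if_neg hJ, map_zero, zero_mul]
  · rw [if_neg h]
    have hJ : J ≠ insert a K := fun hc => h (hc ▸ Finset.mem_insert_self a K)
    rw [if_neg hJ]

lemma ρ_wL_δ (l : List (Fin n)) (hl : l.Pairwise (· < ·)) :
    ρ n q hq (wL n q hq l) (δ n ∅) = δ n l.toFinset := by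
  induction l with
  | nil =>
    rw [wL_nil, map_one]
    show δ n ∅ = δ n ([] : List (Fin n)).toFinset
    rw [List.toFinset_nil]
  | cons a l ih =>
    rw [List.pairwise_cons] at hl
    rw [wL_cons, map_mul, Module.End.mul_apply, ih hl.2, ρ_wg]
    rw [show (a :: l).toFinset = insert a l.toFinset from List.toFinset_cons]
    exact Aw_δ n q hq a l.toFinset (fun b hb => hl.1 b (List.mem_toFinset.mp hb))

lemma ρ_wI_δ (S : Finset (Fin n)) :
    ρ n q hq (wI n q hq S) (δ n ∅) = δ n S := by
  rw [wI_eq_wL, ρ_wL_δ n q hq _ (S.sortedLT_sort.pairwise), Finset.sort_toFinset]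

lemma coeff_det (c : Finset (Fin n) → MF n)
    (x : WAlg n q hq)
    (hx : x = ∑ I : Finset (Fin n), μW n q hq (c I) * wI n q hq I)
    (J : Finset (Fin n)) :
    ρ n q hq x (δ n ∅) J = c J := by
  rw [hx, map_sum, LinearMap.coe_sum, Finset.sum_apply, Finset.sum_apply]
  rw [Finset.sum_eq_single J]
  · rw [map_mul, Module.End.mul_apply, ρ_wI_δ, ρ_mu, Af_apply]
    simp [δ]
  · intro I _ hIJ
    rw [map_mul, Module.End.mul_apply, ρ_wI_δ, ρ_mu, Af_apply]
    simp [δ, Ne.symm hIJ]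
  · intro h; exact absurd (Finset.mem_univ J) h

end S9
end Aux6
open Finset in
/-- the ordered monomials `w_I`, `I ⊆ {1,…,n}`, form a basis of the
dynamical exterior algebra `W` over the coefficient field `M`
(acting via the left moment map `μ_W`); in particular `dim_M W = 2^n`. -/
theorem stmt_9 (n : ℕ) (q : ℂ) (hq : q ≠ 0) (hgen : ∀ k : ℕ, 1 ≤ k → q ^ (2 * k) ≠ 1) :
    ∀ x : WAlg n q hq, ∃! c : Finset (Fin n) → MF n,
      x = ∑ I : Finset (Fin n), μW n q hq (c I) * wI n q hq I := by
  intro x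
  obtain ⟨c, hc⟩ := S9.rep_all n q hq x
  refine ⟨c, hc, fun d hd => ?_⟩
  funext J
  rw [← S9.coeff_det n q hq d x hd J, S9.coeff_det n q hq c x hc J]
end
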